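/- Let x ∈ ℝⁿ, let B be a symmetric positive semidefinite n×n matrix with operator norm ‖B‖ ≤ M, let α > 0, set H = B + αI, and let ν ∈ [0,1). Suppose x̂ ∈ ℝⁿ is such that the residual e = x̂ − Prox_g(x̂ − ∇f(x) − H(x̂ − x)) satisfies ‖e‖ ≤ ν‖𝒢(x)‖. Then ‖𝒢(x)‖ ≤ ((1 + M + α)/(1 − ν)) · ‖x̂ − x‖. -/

import Mathlib

open scoped RealInnerProductSpace
open Metric Set Filter

noncomputable section

abbrev En (n : ℕ) : Type := EuclideanSpace ℝ (Fin n)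

/-- Convex subdifferential of an extended-real-valued function `g` at `x`. -/
def ESubdiff {n : ℕ} (g : En n → EReal) (x : En n) : Set (En n) :=
  {v | ∀ y, g x + ((⟪v, y - x⟫ : ℝ) : EReal) ≤ g y}

/-- `g` is proper: it never takes the value `-∞` and is finite somewhere. -/
def ProperFun {n : ℕ} (g : En n → EReal) : Prop :=
  (∀ x, g x ≠ ⊥) ∧ ∃ x, g x ≠ ⊤

/-- Convexity for extended-real-valued functions. -/
def EConvexOn {n : ℕ} (g : En n → EReal) : Prop :=
  ∀ x y : En n, ∀ a b : ℝ, 0 ≤ a → 0 ≤ b → a + b = 1 →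
    g (a • x + b • y) ≤ (a : EReal) * g x + (b : EReal) * g y

/-- `p` minimizes `y ↦ g y + ‖y - u‖ ^ 2 / 2`. -/
def IsProxPt {n : ℕ} (g : En n → EReal) (u p : En n) : Prop :=
  ∀ y, g p + ((‖p - u‖ ^ 2 / 2 : ℝ) : EReal) ≤ g y + ((‖y - u‖ ^ 2 / 2 : ℝ) : EReal)

/-- `prox` maps each `u` to the unique minimizer of `y ↦ g y + ‖y - u‖ ^ 2 / 2`. -/
def IsProxMap {n : ℕ} (g : En n → EReal) (prox : En n → En n) : Prop :=
  ∀ u, IsProxPt g u (prox u) ∧ ∀ p, IsProxPt g u p → p = prox u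

/-- The solution set `𝒳* = argmin (f + g)`. -/
def ArgminSet {n : ℕ} (f : En n → ℝ) (g : En n → EReal) : Set (En n) :=
  {x | ∀ y, (f x : EReal) + g x ≤ (f y : EReal) + g y}

/-- The prox-gradient mapping `𝒢 x = x - Prox_g (x - ∇f x)`. -/
def Gmap {n : ℕ} (f' prox : En n → En n) (x : En n) : En n :=
  x - prox (x - f' x)

lemma proxpt_ne_top {n : ℕ} {g : En n → EReal} (hprop : ProperFun g)
    {u p : En n} (h : IsProxPt g u p) : g p ≠ ⊤ := by
  obtain ⟨y0, hy0⟩ := hprop.2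
  intro htop
  have := h y0
  rw [htop] at this
  have h1 : (⊤ : EReal) + ((‖p - u‖ ^ 2 / 2 : ℝ) : EReal) = ⊤ := by
    simp [EReal.top_add_of_ne_bot]
  rw [h1, top_le_iff] at this
  have h2 : g y0 + ((‖y0 - u‖ ^ 2 / 2 : ℝ) : EReal) < ⊤ :=
    EReal.add_lt_top hy0 (EReal.coe_ne_top _)
  exact absurd this (ne_top_of_lt h2).elim

lemma prox_subgrad {n : ℕ} {g : En n → EReal} (hprop : ProperFun g) (hconv : EConvexOn g)
    {u p q : En n} (h : IsProxPt g u p) (hq : g q ≠ ⊤) :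
    (g p).toReal ≤ (g q).toReal + ⟪p - u, q - p⟫ := by
  set a := (g p).toReal
  set b := (g q).toReal
  have hpt : g p ≠ ⊤ := proxpt_ne_top hprop h
  have hpa : g p = (a : EReal) := (EReal.coe_toReal hpt (hprop.1 p)).symm
  have hqb : g q = (b : EReal) := (EReal.coe_toReal hq (hprop.1 q)).symm
  -- key step: for each t ∈ (0,1]
  have key : ∀ t : ℝ, 0 < t → t ≤ 1 →
      0 ≤ (b - a) + ⟪p - u, q - p⟫ + t * (‖q - p‖ ^ 2 / 2) := by
    intro t ht0 ht1
    have hc := hconv p q (1 - t) t (by linarith) (le_of_lt ht0) (by ring)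
    rw [hpa, hqb] at hc
    have hco : ((1 - t : ℝ) : EReal) * (a : EReal) + (t : EReal) * (b : EReal)
        = (((1 - t) * a + t * b : ℝ) : EReal) := by
      rw [← EReal.coe_mul, ← EReal.coe_mul, ← EReal.coe_add]
    rw [hco] at hc
    set y := (1 - t) • p + t • q with hy
    have hmin := h y
    rw [hpa] at hmin
    have hchain : ((a : ℝ) : EReal) + ((‖p - u‖ ^ 2 / 2 : ℝ) : EReal)
        ≤ (((1 - t) * a + t * b + ‖y - u‖ ^ 2 / 2 : ℝ) : EReal) := by
      refine le_trans hmin ?_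
      rw [EReal.coe_add]
      exact add_le_add hc le_rfl
    rw [← EReal.coe_add, EReal.coe_le_coe_iff] at hchain
    have hyeq : y - u = (p - u) + t • (q - p) := by
      rw [hy]; module
    have hnorm : ‖y - u‖ ^ 2 = ‖p - u‖ ^ 2 + 2 * (t * ⟪p - u, q - p⟫) + t ^ 2 * ‖q - p‖ ^ 2 := by
      rw [hyeq, @norm_add_sq_real, real_inner_smul_right, norm_smul,
        Real.norm_eq_abs, abs_of_pos ht0]
      ring
    rw [hnorm] at hchain
    have h2 : 0 ≤ t * ((b - a) + ⟪p - u, q - p⟫ + t * (‖q - p‖ ^ 2 / 2)) := by nlinarith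
    nlinarith
  -- take the limit t → 0⁺
  by_contra hcon
  push_neg at hcon
  set c := -((b - a) + ⟪p - u, q - p⟫) with hcdef
  have hc0 : 0 < c := by rw [hcdef]; linarith
  set K := ‖q - p‖ ^ 2 / 2 with hK
  have hK0 : 0 ≤ K := by positivity
  rcases eq_or_lt_of_le hK0 with hKz | hKpos
  · linarith [key 1 one_pos le_rfl]
  · have ht := key (min 1 (c / (2 * K))) (lt_min one_pos (by positivity)) (min_le_left _ _)
    have : min 1 (c / (2 * K)) * K ≤ (c / (2 * K)) * K :=
      mul_le_mul_of_nonneg_right (min_le_right _ _) hK0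
    rw [div_mul_eq_mul_div, mul_comm, mul_div_assoc] at this
    have hKK : K / (2 * K) = 1 / 2 := by field_simp
    rw [hKK] at this
    linarith

lemma prox_firm {n : ℕ} {g : En n → EReal} (hprop : ProperFun g) (hconv : EConvexOn g)
    {u1 u2 p1 p2 : En n} (h1 : IsProxPt g u1 p1) (h2 : IsProxPt g u2 p2) :
    ‖p2 - p1‖ ^ 2 ≤ ⟪p2 - p1, u2 - u1⟫ := by
  have ha := prox_subgrad hprop hconv h1 (proxpt_ne_top hprop h2)
  have hb := prox_subgrad hprop hconv h2 (proxpt_ne_top hprop h1)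
  have hsum : 0 ≤ ⟪p1 - u1, p2 - p1⟫ + ⟪p2 - u2, p1 - p2⟫ := by linarith
  have hd : ⟪p2 - u2, p1 - p2⟫ = -⟪p2 - u2, p2 - p1⟫ := by
    rw [show p1 - p2 = -(p2 - p1) from by abel, inner_neg_right]
  have hexp : ⟪p1 - u1, p2 - p1⟫ + ⟪p2 - u2, p1 - p2⟫
      = ⟪p2 - p1, u2 - u1⟫ - ‖p2 - p1‖ ^ 2 := by
    rw [hd, ← sub_eq_add_neg, ← inner_sub_left,
      show (p1 - u1) - (p2 - u2) = (u2 - u1) - (p2 - p1) from by abel,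
      inner_sub_left, real_inner_self_eq_norm_sq, real_inner_comm (u2 - u1) (p2 - p1)]
  linarith


lemma key_bound {n : ℕ} (d s Hs : En n)
    (hfirm : ‖d‖ ^ 2 ≤ ⟪d, s - Hs⟫) (hpos : 0 ≤ ⟪s, Hs⟫) :
    ‖d - s‖ ≤ ‖s‖ + ‖Hs‖ := by
  have hfexp : ⟪d, s - Hs⟫ = ⟪d, s⟫ - ⟪d, Hs⟫ := inner_sub_right d s Hs
  have hds : ‖d - s‖ ^ 2 = ‖d‖ ^ 2 - 2 * ⟪d, s⟫ + ‖s‖ ^ 2 := norm_sub_sq_real d s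
  have hre : ⟪d - s, s + Hs⟫ = ⟪d, s⟫ + ⟪d, Hs⟫ - ‖s‖ ^ 2 - ⟪s, Hs⟫ := by
    simp only [inner_sub_left, inner_add_right, real_inner_self_eq_norm_sq]
    ring
  have hcs : -(‖d - s‖ * ‖s + Hs‖) ≤ ⟪d - s, s + Hs⟫ :=
    neg_le_of_abs_le (abs_real_inner_le_norm _ _)
  have hsn : ‖s + Hs‖ ≤ ‖s‖ + ‖Hs‖ := norm_add_le _ _
  have hq : ‖d - s‖ ^ 2 ≤ ‖d - s‖ * (‖s‖ + ‖Hs‖) := by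
    nlinarith [norm_nonneg (d - s), norm_nonneg (s + Hs)]
  rcases eq_or_lt_of_le (norm_nonneg (d - s)) with h0 | h0
  · rw [← h0]; positivity
  · nlinarith

/-- If `H = B + αI` with `B` symmetric psd, `‖B‖ ≤ M`, `α > 0`, and the
residual `e = xhat - Prox_g(xhat - ∇f(x) - H(xhat - x))` satisfies `‖e‖ ≤ ν ‖𝒢(x)‖` with
`ν ∈ [0,1)`, then `‖𝒢(x)‖ ≤ ((1 + M + α)/(1 - ν)) ‖xhat - x‖`. -/
theorem norm_Gmap_le_of_residual {n : ℕ}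
    (f : En n → ℝ) (f' : En n → En n) (g : En n → EReal) (prox : En n → En n)
    (hfconv : ConvexOn ℝ Set.univ f)
    (hgrad : ∀ x, HasGradientAt f (f' x) x)
    (hgradcont : Continuous f')
    (hgproper : ProperFun g) (hglsc : LowerSemicontinuous g) (hgconv : EConvexOn g)
    (hprox : IsProxMap g prox)
    (x xhat : En n) (B : En n →L[ℝ] En n)
    (hBsymm : ∀ u v : En n, ⟪B u, v⟫ = ⟪u, B v⟫)
    (hBpsd : ∀ u : En n, 0 ≤ ⟪B u, u⟫)
    (M : ℝ) (hBM : ‖B‖ ≤ M)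
    (α : ℝ) (hα : 0 < α)
    (ν : ℝ) (hν0 : 0 ≤ ν) (hν1 : ν < 1)
    (hres : ‖xhat - prox (xhat - f' x - (B (xhat - x) + α • (xhat - x)))‖ ≤
      ν * ‖Gmap f' prox x‖) :
    ‖Gmap f' prox x‖ ≤ ((1 + M + α) / (1 - ν)) * ‖xhat - x‖ := by
  classical
  set s : En n := xhat - x with hs
  set p1 : En n := prox (x - f' x) with hp1
  set u2 : En n := xhat - f' x - (B (xhat - x) + α • (xhat - x)) with hu2
  set p2 : En n := prox u2 with hp2
  set Hs : En n := B s + α • s with hHs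
  have h1 : IsProxPt g (x - f' x) p1 := (hprox (x - f' x)).1
  have h2 : IsProxPt g u2 p2 := (hprox u2).1
  have hfirm := prox_firm hgproper hgconv h1 h2
  have hu : u2 - (x - f' x) = s - Hs := by
    rw [hu2, hHs, hs]; abel
  rw [hu] at hfirm
  set d : En n := p2 - p1 with hd
  have hBs : ‖B s‖ ≤ M * ‖s‖ :=
    le_trans (B.le_opNorm s) (mul_le_mul_of_nonneg_right hBM (norm_nonneg _))
  have hHsn : ‖Hs‖ ≤ (M + α) * ‖s‖ := by
    rw [hHs]
    refine le_trans (norm_add_le _ _) ?_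
    rw [norm_smul, Real.norm_eq_abs, abs_of_pos hα]
    linarith
  have hpos : 0 ≤ ⟪s, Hs⟫ := by
    rw [hHs, inner_add_right, real_inner_smul_right, ← hBsymm s s]
    have h2 : (0:ℝ) ≤ ⟪s, s⟫ := real_inner_self_nonneg
    nlinarith [hBpsd s, hα.le]
  have hkey : ‖d - s‖ ≤ ‖s‖ + ‖Hs‖ := key_bound d s Hs hfirm hpos
  have hGe : Gmap f' prox x - (xhat - p2) = d - s := by
    rw [Gmap, hd, hp1, hp2, hs]; abel
  have htri : ‖Gmap f' prox x‖ ≤ ‖d - s‖ + ‖xhat - p2‖ := by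
    calc ‖Gmap f' prox x‖ = ‖(d - s) + (xhat - p2)‖ := by rw [← hGe]; congr 1; abel
    _ ≤ ‖d - s‖ + ‖xhat - p2‖ := norm_add_le _ _
  have hres' : ‖xhat - p2‖ ≤ ν * ‖Gmap f' prox x‖ := hres
  have h1ν : 0 < 1 - ν := by linarith
  rw [div_mul_eq_mul_div, le_div_iff₀ h1ν]
  have hsx : ‖xhat - x‖ = ‖s‖ := by rw [hs]
  rw [hsx]
  nlinarith [htri, hres', hkey, hHsn]
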